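/- Fix the Lorenz parameters s = 10, r = 28, b = 8/3, and let x₃₀ ∈ ℝ and c > 0. Define a₀ = 4096·x₃₀⁴, a₁ = 384·x₃₀²·(3x₃₀² − 228x₃₀ + 4762), a₂ = 9·(x₃₀² − 76x₃₀ + 1404)·(9x₃₀² − 684x₃₀ + 13436). Then the condition '(there exists α > 0 such that for all real x₁, x₂, x₃: V̇₂(x) ≤ −α·(V₂(x) − c²))' holds if and only if x₃₀² − 76x₃₀ + 1404 < 0 and there exists c₄ which is the greatest real solution of a₂·y⁴ + a₁·y² + a₀ = 0 with c ≥ c₄. -/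

import Mathlib

private lemma aux_sq (A B : ℝ) (h : ∀ t : ℝ, A * t ^ 2 ≤ B) : A ≤ 0 := by
  by_contra hA
  push_neg at hA
  have hB : 0 ≤ B := by have := h 0; nlinarith
  have hBA : 0 ≤ B / A := by positivity
  have hs : Real.sqrt (B / A) ^ 2 = B / A := Real.sq_sqrt hBA
  have hmul : A * (B / A) = B := by field_simp
  have ht := h (Real.sqrt (B / A) + 1)
  nlinarith [Real.sqrt_nonneg (B / A)]

private lemma exists_A (x₃₀ : ℝ) (hP : x₃₀ ^ 2 - 76 * x₃₀ + 1404 < 0) :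
    ∃ A : ℝ, 0 < A ∧ A ≤ 2 ∧ x₃₀ ^ 2 - 76 * x₃₀ + 1404 = A ^ 2 - 22 * A := by
  set P := x₃₀ ^ 2 - 76 * x₃₀ + 1404 with hPdef
  have hP' : (81:ℝ) ≤ 121 + P := by nlinarith [sq_nonneg (x₃₀ - 38)]
  have h0 : (0:ℝ) ≤ 121 + P := by linarith
  have hs : Real.sqrt (121 + P) ^ 2 = 121 + P := Real.sq_sqrt h0
  have hnn := Real.sqrt_nonneg (121 + P)
  refine ⟨11 - Real.sqrt (121 + P), by nlinarith, by nlinarith, by nlinarith⟩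

private lemma fact_id (x₃₀ A t : ℝ)
    (hAP : x₃₀ ^ 2 - 76 * x₃₀ + 1404 = A ^ 2 - 22 * A) :
    9 * (x₃₀ ^ 2 - 76 * x₃₀ + 1404) * (9 * x₃₀ ^ 2 - 684 * x₃₀ + 13436) * t ^ 2
      + 384 * x₃₀ ^ 2 * (3 * x₃₀ ^ 2 - 228 * x₃₀ + 4762) * t + 4096 * x₃₀ ^ 4
    = (64 * x₃₀ ^ 2 - (A * (48 - 9 * A)) * t)
        * ((9 * A ^ 2 - 348 * A + 3300) * t + 64 * x₃₀ ^ 2) := by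
  linear_combination ((81 * ((x₃₀ ^ 2 - 76 * x₃₀ + 1404) + (A ^ 2 - 22 * A)) + 7200) * t ^ 2
      + 1152 * x₃₀ ^ 2 * t) * hAP

/-- Given the substitution `P = A² − 22A` with `A ∈ (0,2]`, the condition
`64 x₃₀² ≤ c² · A(48−9A)` is equivalent to the greatest-root condition. -/
private lemma C_iff_root (x₃₀ c A : ℝ) (hc : 0 < c) (hA1 : 0 < A) (hA2 : A ≤ 2)
    (hAP : x₃₀ ^ 2 - 76 * x₃₀ + 1404 = A ^ 2 - 22 * A) :
    64 * x₃₀ ^ 2 ≤ c ^ 2 * (A * (48 - 9 * A)) ↔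
    (∃ c₄ : ℝ,
        (9 * (x₃₀ ^ 2 - 76 * x₃₀ + 1404) * (9 * x₃₀ ^ 2 - 684 * x₃₀ + 13436) * c₄ ^ 4
            + 384 * x₃₀ ^ 2 * (3 * x₃₀ ^ 2 - 228 * x₃₀ + 4762) * c₄ ^ 2
            + 4096 * x₃₀ ^ 4 = 0 ∧
         ∀ y : ℝ, 9 * (x₃₀ ^ 2 - 76 * x₃₀ + 1404) * (9 * x₃₀ ^ 2 - 684 * x₃₀ + 13436) * y ^ 4
            + 384 * x₃₀ ^ 2 * (3 * x₃₀ ^ 2 - 228 * x₃₀ + 4762) * y ^ 2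
            + 4096 * x₃₀ ^ 4 = 0 → y ≤ c₄) ∧
        c ≥ c₄) := by
  have hG : 0 < A * (48 - 9 * A) := by nlinarith
  have hM : (0:ℝ) < 9 * A ^ 2 - 348 * A + 3300 := by nlinarith
  set c₄ : ℝ := Real.sqrt (64 * x₃₀ ^ 2 / (A * (48 - 9 * A))) with hc₄def
  have hc₄nn : 0 ≤ c₄ := Real.sqrt_nonneg _
  have hc₄sq : c₄ ^ 2 = 64 * x₃₀ ^ 2 / (A * (48 - 9 * A)) :=
    Real.sq_sqrt (by positivity)
  have hGc₄ : A * (48 - 9 * A) * c₄ ^ 2 = 64 * x₃₀ ^ 2 := by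
    rw [hc₄sq, mul_comm]; exact div_mul_cancel₀ _ (ne_of_gt hG)
  have hroot : 9 * (x₃₀ ^ 2 - 76 * x₃₀ + 1404) * (9 * x₃₀ ^ 2 - 684 * x₃₀ + 13436) * c₄ ^ 4
      + 384 * x₃₀ ^ 2 * (3 * x₃₀ ^ 2 - 228 * x₃₀ + 4762) * c₄ ^ 2 + 4096 * x₃₀ ^ 4 = 0 := by
    have h := fact_id x₃₀ A (c₄ ^ 2) hAP
    have h2 : 64 * x₃₀ ^ 2 - A * (48 - 9 * A) * c₄ ^ 2 = 0 := by linarith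
    linear_combination h + ((9 * A ^ 2 - 348 * A + 3300) * c₄ ^ 2 + 64 * x₃₀ ^ 2) * h2
  have hgreat : ∀ y : ℝ,
      9 * (x₃₀ ^ 2 - 76 * x₃₀ + 1404) * (9 * x₃₀ ^ 2 - 684 * x₃₀ + 13436) * y ^ 4
        + 384 * x₃₀ ^ 2 * (3 * x₃₀ ^ 2 - 228 * x₃₀ + 4762) * y ^ 2
        + 4096 * x₃₀ ^ 4 = 0 → y ≤ c₄ := by
    intro y hy
    have h := fact_id x₃₀ A (y ^ 2) hAP
    have hy' : (64 * x₃₀ ^ 2 - A * (48 - 9 * A) * y ^ 2)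
        * ((9 * A ^ 2 - 348 * A + 3300) * y ^ 2 + 64 * x₃₀ ^ 2) = 0 := by
      linear_combination hy - h
    rcases mul_eq_zero.mp hy' with h1 | h1
    · have hysq : y ^ 2 = c₄ ^ 2 := by
        have : A * (48 - 9 * A) * y ^ 2 = A * (48 - 9 * A) * c₄ ^ 2 := by linarith
        exact mul_left_cancel₀ (ne_of_gt hG) this
      calc y ≤ |y| := le_abs_self y
        _ = Real.sqrt (y ^ 2) := (Real.sqrt_sq_eq_abs y).symm
        _ = Real.sqrt (c₄ ^ 2) := by rw [hysq]
        _ = c₄ := Real.sqrt_sq hc₄nn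
    · have hy0 : y = 0 := by
        have h2 : y ^ 2 ≤ 0 := by nlinarith [sq_nonneg x₃₀]
        have := sq_nonneg y
        nlinarith [sq_abs y, abs_nonneg y]
      rw [hy0]; exact hc₄nn
  constructor
  · intro hC
    refine ⟨c₄, ⟨hroot, hgreat⟩, ?_⟩
    have h1 : 64 * x₃₀ ^ 2 / (A * (48 - 9 * A)) ≤ c ^ 2 := by
      rw [div_le_iff₀ hG]; linarith
    calc c₄ = Real.sqrt (64 * x₃₀ ^ 2 / (A * (48 - 9 * A))) := hc₄def
      _ ≤ Real.sqrt (c ^ 2) := Real.sqrt_le_sqrt h1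
      _ = c := Real.sqrt_sq hc.le
  · rintro ⟨c₄', ⟨_, hgt'⟩, hcge⟩
    have h1 : c₄ ≤ c₄' := hgt' c₄ hroot
    have h2 : c₄ ≤ c := le_trans h1 hcge
    have h3 : c₄ ^ 2 ≤ c ^ 2 := by nlinarith
    rw [hc₄sq, div_le_iff₀ hG] at h3
    linarith

set_option maxHeartbeats 1000000 in
theorem lorenz_sphere_variable_center_qe
    (x₃₀ c : ℝ) (hc : 0 < c)
    (a₀ a₁ a₂ : ℝ)
    (ha₀ : a₀ = 4096 * x₃₀ ^ 4)
    (ha₁ : a₁ = 384 * x₃₀ ^ 2 * (3 * x₃₀ ^ 2 - 228 * x₃₀ + 4762))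
    (ha₂ : a₂ = 9 * (x₃₀ ^ 2 - 76 * x₃₀ + 1404) * (9 * x₃₀ ^ 2 - 684 * x₃₀ + 13436)) :
    (∃ α : ℝ, 0 < α ∧ ∀ x₁ x₂ x₃ : ℝ,
        20 * x₁ * (x₂ - x₁) + 2 * x₂ * (28 * x₁ - x₂ - x₁ * x₃)
          + 2 * (x₃ - x₃₀) * (x₁ * x₂ - (8 / 3) * x₃)
        ≤ -α * (x₁ ^ 2 + x₂ ^ 2 + (x₃ - x₃₀) ^ 2 - c ^ 2))
    ↔ (x₃₀ ^ 2 - 76 * x₃₀ + 1404 < 0 ∧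
        ∃ c₄ : ℝ,
          (a₂ * c₄ ^ 4 + a₁ * c₄ ^ 2 + a₀ = 0 ∧
           ∀ y : ℝ, a₂ * y ^ 4 + a₁ * y ^ 2 + a₀ = 0 → y ≤ c₄) ∧
          c ≥ c₄) := by
  subst ha₀ ha₁ ha₂
  constructor
  · rintro ⟨α, hα, H⟩
    have h2 : α ≤ 2 := by
      have := aux_sq (α - 2) (α * c ^ 2) (fun t => by linarith [H 0 t x₃₀])
      linarith
    have hq := aux_sq ((20 - α) * ((76 - 2 * x₃₀) ^ 2 - 4 * (20 - α) * (2 - α))) (α * c ^ 2)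
      (fun t => by linarith [H ((76 - 2 * x₃₀) * t) (2 * (20 - α) * t) x₃₀])
    have hk : (76 - 2 * x₃₀) ^ 2 ≤ 4 * (20 - α) * (2 - α) := by nlinarith
    have hP : x₃₀ ^ 2 - 76 * x₃₀ + 1404 < 0 := by nlinarith
    refine ⟨hP, ?_⟩
    obtain ⟨A, hA1, hA2, hAP⟩ := exists_A x₃₀ hP
    -- extract the x₃-direction condition
    have hβ : (0:ℝ) < 16 - 3 * α := by linarith
    have hd : 8 * x₃₀ / (16 - 3 * α) * (16 - 3 * α) = 8 * x₃₀ :=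
      div_mul_cancel₀ _ (ne_of_gt hβ)
    have h3 := H 0 0 (x₃₀ - 8 * x₃₀ / (16 - 3 * α))
    have hcα : 64 * x₃₀ ^ 2 ≤ α * c ^ 2 * (48 - 9 * α) := by
      nlinarith [h3, hd, sq_nonneg (8 * x₃₀ / (16 - 3 * α)), mul_pos hβ hβ,
        mul_pos hα (mul_pos hβ hβ)]
    -- α ≤ A
    have hαA : α ≤ A := by nlinarith [hk, hAP]
    -- conclude C
    have hC : 64 * x₃₀ ^ 2 ≤ c ^ 2 * (A * (48 - 9 * A)) := by
      nlinarith [hcα, mul_nonneg (mul_nonneg (sub_nonneg.2 hαA)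
        (by linarith : (0:ℝ) ≤ 48 - 9 * A - 9 * α)) (sq_nonneg c)]
    exact (C_iff_root x₃₀ c A hc hA1 hA2 hAP).mp hC
  · rintro ⟨hP, hRHS⟩
    obtain ⟨A, hA1, hA2, hAP⟩ := exists_A x₃₀ hP
    have hC : 64 * x₃₀ ^ 2 ≤ c ^ 2 * (A * (48 - 9 * A)) :=
      (C_iff_root x₃₀ c A hc hA1 hA2 hAP).mpr hRHS
    refine ⟨A, hA1, fun x₁ x₂ x₃ => ?_⟩
    have key : 12 * (20 - A) * (16 - 3 * A)
        * ((-A * (x₁ ^ 2 + x₂ ^ 2 + (x₃ - x₃₀) ^ 2 - c ^ 2))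
          - (20 * x₁ * (x₂ - x₁) + 2 * x₂ * (28 * x₁ - x₂ - x₁ * x₃)
            + 2 * (x₃ - x₃₀) * (x₁ * x₂ - (8 / 3) * x₃)))
        = 3 * (16 - 3 * A) * (2 * (20 - A) * x₁ - (76 - 2 * x₃₀) * x₂) ^ 2
          + 4 * (20 - A) * ((16 - 3 * A) * (x₃ - x₃₀) + 8 * x₃₀) ^ 2
          + 4 * (20 - A) * (c ^ 2 * (A * (48 - 9 * A)) - 64 * x₃₀ ^ 2)
          + (-12 * (16 - 3 * A) * x₂ ^ 2)
            * ((x₃₀ ^ 2 - 76 * x₃₀ + 1404) - (A ^ 2 - 22 * A)) := by ring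
    have hE : (x₃₀ ^ 2 - 76 * x₃₀ + 1404) - (A ^ 2 - 22 * A) = 0 := by linarith
    rw [hE, mul_zero, add_zero] at key
    have h1 := mul_nonneg (by linarith : (0:ℝ) ≤ 3 * (16 - 3 * A))
        (sq_nonneg (2 * (20 - A) * x₁ - (76 - 2 * x₃₀) * x₂))
    have h2 := mul_nonneg (by linarith : (0:ℝ) ≤ 4 * (20 - A))
        (sq_nonneg ((16 - 3 * A) * (x₃ - x₃₀) + 8 * x₃₀))
    have h3 := mul_nonneg (by linarith : (0:ℝ) ≤ 4 * (20 - A)) (sub_nonneg.2 hC)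
    have hnn : 0 ≤ 12 * (20 - A) * (16 - 3 * A)
        * ((-A * (x₁ ^ 2 + x₂ ^ 2 + (x₃ - x₃₀) ^ 2 - c ^ 2))
          - (20 * x₁ * (x₂ - x₁) + 2 * x₂ * (28 * x₁ - x₂ - x₁ * x₃)
            + 2 * (x₃ - x₃₀) * (x₁ * x₂ - (8 / 3) * x₃))) := by
      rw [key]; linarith
    have hpos : (0:ℝ) < 12 * (20 - A) * (16 - 3 * A) := by nlinarith
    by_contra hlt
    push_neg at hlt
    have hneg := mul_neg_of_pos_of_neg hpos (by linarith :
        (-A * (x₁ ^ 2 + x₂ ^ 2 + (x₃ - x₃₀) ^ 2 - c ^ 2))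
          - (20 * x₁ * (x₂ - x₁) + 2 * x₂ * (28 * x₁ - x₂ - x₁ * x₃)
            + 2 * (x₃ - x₃₀) * (x₁ * x₂ - (8 / 3) * x₃)) < 0)
    linarith
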